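/- Let m, n be positive integers, A ∈ M_{m,n}(ℝ), and let (y_k)_{k≥1} be a sequence of nonzero vectors in ℤ^m such that Y_k = ‖y_k‖ is strictly increasing with Y_k → ∞ and M_k = ‖(^tA) y_k‖_ℤ is strictly decreasing with M_k > 0 for all k. For k ≥ 2 set γ_k = max( (Y_k^{m/n} M_{k-1})^{n/(m+n)}, (Y_{k+1}^{m/n} M_k)^{n/(m+n)} ). Then for any α > 0, if b ∈ [0,1]^m satisfies ‖b·y_k‖_ℤ > α γ_k for all sufficiently large k ≥ 2, then b ∈ Bad_A((α−n)/m); that is, there are only finitely many q ∈ ℤ^n with ‖Aq − b‖_ℤ < ((α−n)/m) ‖q‖^{−n/m}. -/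

import Mathlib

open MeasureTheory Filter

/-- Distance from `x ∈ ℝ^k` to the nearest integer vector, in the sup norm. -/
noncomputable def intDist {k : ℕ} (x : Fin k → ℝ) : ℝ :=
  ⨅ p : Fin k → ℤ, ‖x - (fun i => (p i : ℝ))‖

/-- Distance from a real number to the nearest integer. -/
noncomputable def intDistR (t : ℝ) : ℝ := ⨅ p : ℤ, |t - (p : ℝ)|

lemma intDistR_le (t : ℝ) (p : ℤ) : intDistR t ≤ |t - (p : ℝ)| :=
  ciInf_le ⟨0, by rintro x ⟨p, rfl⟩; exact abs_nonneg _⟩ p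

lemma intDist_nonneg {k : ℕ} (x : Fin k → ℝ) : 0 ≤ intDist x :=
  le_ciInf fun p => norm_nonneg _

lemma intDist_le {k : ℕ} (x : Fin k → ℝ) (p : Fin k → ℤ) :
    intDist x ≤ ‖x - fun i => (p i : ℝ)‖ :=
  ciInf_le ⟨0, by rintro z ⟨p, rfl⟩; exact norm_nonneg _⟩ p

lemma intDist_eq {k : ℕ} (x : Fin k → ℝ) :
    intDist x = ‖x - fun i => ((round (x i) : ℤ) : ℝ)‖ := by
  refine le_antisymm (intDist_le x _) (le_ciInf fun p => ?_)
  rw [pi_norm_le_iff_of_nonneg (norm_nonneg _)]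
  intro i
  calc ‖(x - fun i => ((round (x i) : ℤ) : ℝ)) i‖ = |x i - (round (x i) : ℝ)| := by
        simp [Real.norm_eq_abs]
    _ ≤ |x i - (p i : ℝ)| := round_le _ _
    _ ≤ ‖x - fun i => (p i : ℝ)‖ := by
        simpa [Real.norm_eq_abs] using norm_le_pi_norm (x - fun i => (p i : ℝ)) i

lemma abs_sub_round_le_intDist {k : ℕ} (x : Fin k → ℝ) (i : Fin k) :
    |x i - (round (x i) : ℝ)| ≤ intDist x := by
  rw [intDist_eq]
  simpa [Real.norm_eq_abs] using
    norm_le_pi_norm (x - fun i => ((round (x i) : ℤ) : ℝ)) i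

/-- The key transference estimate: `‖b·y‖_ℤ ≤ n‖q‖·‖ᵗA y‖_ℤ + m‖y‖·‖Aq-b‖_ℤ`. -/
lemma key_estimate (m n : ℕ) (A : Matrix (Fin m) (Fin n) ℝ)
    (y : Fin m → ℤ) (b : Fin m → ℝ) (q : Fin n → ℤ) :
    intDistR (∑ i, b i * (y i : ℝ)) ≤
      n * ‖(fun j => (q j : ℝ))‖ * intDist (A.transpose.mulVec (fun i => (y i : ℝ)))
      + m * ‖(fun i => (y i : ℝ))‖ * intDist (A.mulVec (fun j => (q j : ℝ)) - b) := by
  set yc : Fin m → ℝ := fun i => (y i : ℝ) with hyc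
  set qc : Fin n → ℝ := fun j => (q j : ℝ) with hqc
  set t : Fin n → ℝ := A.transpose.mulVec yc with ht
  set d : Fin m → ℝ := A.mulVec qc - b with hd
  set N : ℤ := (∑ j, q j * round (t j)) - ∑ i, round (d i) * y i with hN
  have hexch : ∑ i, (A.mulVec qc) i * yc i = ∑ j, qc j * t j := by
    simp only [Matrix.mulVec, dotProduct, Matrix.transpose_apply, ht,
      Finset.sum_mul, Finset.mul_sum]
    rw [Finset.sum_comm]
    apply Finset.sum_congr rfl; intro j _
    apply Finset.sum_congr rfl; intro i _
    ring
  have hsum : ∑ i, b i * yc i - (N : ℝ)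
      = ∑ j, qc j * (t j - (round (t j) : ℝ)) - ∑ i, (d i - (round (d i) : ℝ)) * yc i := by
    have h2 : ∑ i, b i * yc i = ∑ j, qc j * t j - ∑ i, d i * yc i := by
      rw [← hexch, ← Finset.sum_sub_distrib]
      apply Finset.sum_congr rfl; intro i _
      simp only [hd, Pi.sub_apply]; ring
    rw [h2, hN]
    push_cast
    simp only [mul_sub, sub_mul, Finset.sum_sub_distrib]
    ring
  calc intDistR (∑ i, b i * yc i) ≤ |∑ i, b i * yc i - (N : ℝ)| := intDistR_le _ N
    _ = |∑ j, qc j * (t j - (round (t j) : ℝ)) - ∑ i, (d i - (round (d i) : ℝ)) * yc i| := by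
        rw [hsum]
    _ ≤ |∑ j, qc j * (t j - (round (t j) : ℝ))| + |∑ i, (d i - (round (d i) : ℝ)) * yc i| :=
        abs_sub _ _
    _ ≤ (∑ j, |qc j * (t j - (round (t j) : ℝ))|) + ∑ i, |(d i - (round (d i) : ℝ)) * yc i| := by
        gcongr <;> exact Finset.abs_sum_le_sum_abs _ _
    _ ≤ (∑ _j : Fin n, ‖qc‖ * intDist t) + ∑ _i : Fin m, intDist d * ‖yc‖ := by
        gcongr with j _ i _
        · rw [abs_mul]
          apply mul_le_mul _ (abs_sub_round_le_intDist t j) (abs_nonneg _) (norm_nonneg _)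
          simpa [Real.norm_eq_abs] using norm_le_pi_norm qc j
        · rw [abs_mul]
          apply mul_le_mul (abs_sub_round_le_intDist d i) _ (abs_nonneg _) (intDist_nonneg d)
          simpa [Real.norm_eq_abs] using norm_le_pi_norm yc i
    _ = n * ‖qc‖ * intDist t + m * ‖yc‖ * intDist d := by
        simp only [Finset.sum_const, Finset.card_univ, Fintype.card_fin, nsmul_eq_mul]
        ring

/-- If `‖b·y_k‖_ℤ > α γ_k` for all sufficiently large `k`, then `b ∈ Bad_A((α-n)/m)`,
i.e. there are only finitely many `q ∈ ℤ^n` with `‖Aq-b‖_ℤ < ((α-n)/m)‖q‖^{-n/m}`.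
The sequence is indexed so that `y (k-1)` plays the role of `y_k`; accordingly the
quantity `γ k` below plays the role of `γ_{k+2}`, paired with `y (k+1)`. -/
theorem mem_bad_of_eventually (m n : ℕ) (hm : 0 < m) (hn : 0 < n)
    (A : Matrix (Fin m) (Fin n) ℝ)
    (y : ℕ → (Fin m → ℤ)) (hy : ∀ k, y k ≠ 0)
    (Y M : ℕ → ℝ)
    (hY : ∀ k, Y k = ‖(fun i => (y k i : ℝ))‖)
    (hM : ∀ k, M k = intDist (A.transpose.mulVec (fun i => (y k i : ℝ))))
    (hYmono : StrictMono Y) (hYtop : Tendsto Y atTop atTop)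
    (hMmono : StrictAnti M) (hMpos : ∀ k, 0 < M k)
    (γ : ℕ → ℝ)
    (hγ : ∀ k, γ k =
      max ((Y (k + 1) ^ ((m : ℝ) / n) * M k) ^ ((n : ℝ) / (m + n)))
          ((Y (k + 2) ^ ((m : ℝ) / n) * M (k + 1)) ^ ((n : ℝ) / (m + n))))
    (α : ℝ) (hα : 0 < α)
    (b : Fin m → ℝ) (hb : b ∈ Set.Icc (0 : Fin m → ℝ) 1)
    (hev : ∃ K : ℕ, ∀ k ≥ K, α * γ k < intDistR (∑ i, b i * ((y (k + 1)) i : ℝ))) :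
    {q : Fin n → ℤ |
      intDist (A.mulVec (fun j => (q j : ℝ)) - b) <
        ((α - n) / m) * ‖(fun j => (q j : ℝ))‖ ^ (-(n : ℝ) / m)}.Finite := by
  obtain ⟨K, hK⟩ := hev
  have hmR : (0:ℝ) < m := by exact_mod_cast hm
  have hnR : (0:ℝ) < n := by exact_mod_cast hn
  have hmn : (0:ℝ) < (m:ℝ) + n := by linarith
  rcases le_or_gt α n with hαn | hαn
  · -- trivial case `α ≤ n` : the set is empty
    convert Set.finite_empty
    rw [Set.eq_empty_iff_forall_notMem]
    intro q hq
    have h1 : (0:ℝ) ≤ intDist (A.mulVec (fun j => (q j : ℝ)) - b) := intDist_nonneg _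
    have h2 : ((α - n) / m) * ‖(fun j => (q j : ℝ))‖ ^ (-(n : ℝ) / m) ≤ 0 :=
      mul_nonpos_of_nonpos_of_nonneg
        (div_nonpos_of_nonpos_of_nonneg (by linarith) hmR.le)
        (Real.rpow_nonneg (norm_nonneg _) _)
    simp only [Set.mem_setOf_eq] at hq
    linarith
  -- main case : α > n
  have hYpos : ∀ k, 0 < Y k := by
    intro k
    rw [hY k, norm_pos_iff]
    intro h
    apply hy k
    funext i
    have h2 := congrFun h i
    simp only [Pi.zero_apply] at h2
    exact_mod_cast h2
  set u : ℕ → ℝ := fun k => (Y (k + 1) / M k) ^ ((m : ℝ) / ((m : ℝ) + n)) with hu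
  have hupos : ∀ k, 0 < u k := fun k =>
    Real.rpow_pos_of_pos (div_pos (hYpos _) (hMpos _)) _
  have e2 : 1 - (m:ℝ)/((m:ℝ)+n) = (n:ℝ)/((m:ℝ)+n) := by field_simp; ring
  -- algebraic identity for the terms of γ
  have main_id : ∀ Yv Mv : ℝ, 0 < Yv → 0 < Mv →
      (Yv ^ ((m:ℝ)/n) * Mv) ^ ((n:ℝ)/((m:ℝ)+n))
        = Yv ^ ((m:ℝ)/((m:ℝ)+n)) * Mv ^ ((n:ℝ)/((m:ℝ)+n)) := by
    intro Yv Mv hYv hMv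
    rw [Real.mul_rpow (Real.rpow_nonneg hYv.le _) hMv.le, ← Real.rpow_mul hYv.le]
    congr 2
    field_simp
  have hid1' : ∀ Yv Mv : ℝ, 0 < Yv → 0 < Mv →
      (Yv / Mv) ^ ((m:ℝ)/((m:ℝ)+n)) * Mv
        = Yv ^ ((m:ℝ)/((m:ℝ)+n)) * Mv ^ ((n:ℝ)/((m:ℝ)+n)) := by
    intro Yv Mv hYv hMv
    rw [Real.div_rpow hYv.le hMv.le, div_mul_eq_mul_div, mul_div_assoc]
    congr 1
    rw [div_eq_iff (ne_of_gt (Real.rpow_pos_of_pos hMv _)), ← Real.rpow_add hMv]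
    have e4 : (n:ℝ)/((m:ℝ)+n) + (m:ℝ)/((m:ℝ)+n) = 1 := by
      rw [← add_div, add_comm, div_self (ne_of_gt hmn)]
    rw [e4, Real.rpow_one]
  have hid2' : ∀ Yv Mv : ℝ, 0 < Yv → 0 < Mv →
      Yv * ((Yv / Mv) ^ ((m:ℝ)/((m:ℝ)+n))) ^ (-(n:ℝ)/m)
        = Yv ^ ((m:ℝ)/((m:ℝ)+n)) * Mv ^ ((n:ℝ)/((m:ℝ)+n)) := by
    intro Yv Mv hYv hMv
    have hd : (0:ℝ) ≤ Yv / Mv := (div_pos hYv hMv).le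
    have eexp : (m:ℝ)/((m:ℝ)+n) * (-(n:ℝ)/m) = -((n:ℝ)/((m:ℝ)+n)) := by
      rw [div_mul_div_comm, mul_comm ((m:ℝ)+n) (m:ℝ), mul_neg, neg_div, neg_inj,
        mul_div_mul_left _ _ (ne_of_gt hmR)]
    rw [← Real.rpow_mul hd, eexp, Real.rpow_neg hd, Real.div_rpow hYv.le hMv.le, inv_div,
      mul_div_assoc', div_eq_iff (ne_of_gt (Real.rpow_pos_of_pos hYv _))]
    have e3 : (m:ℝ)/((m:ℝ)+n) + (n:ℝ)/((m:ℝ)+n) = 1 := by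
      rw [← add_div, div_self (ne_of_gt hmn)]
    have hrearr : Yv ^ ((m:ℝ)/((m:ℝ)+n)) * Mv ^ ((n:ℝ)/((m:ℝ)+n)) * Yv ^ ((n:ℝ)/((m:ℝ)+n))
        = (Yv ^ ((m:ℝ)/((m:ℝ)+n)) * Yv ^ ((n:ℝ)/((m:ℝ)+n))) * Mv ^ ((n:ℝ)/((m:ℝ)+n)) := by
      ring
    rw [hrearr, ← Real.rpow_add hYv, e3, Real.rpow_one, mul_comm]
  have hid1 : ∀ k, u k * M k = (Y (k + 1) ^ ((m:ℝ)/n) * M k) ^ ((n:ℝ)/((m:ℝ)+n)) :=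
    fun k => (hid1' _ _ (hYpos (k+1)) (hMpos k)).trans
      (main_id _ _ (hYpos (k+1)) (hMpos k)).symm
  have hid2 : ∀ k, Y (k + 1) * (u k) ^ (-(n:ℝ)/m)
      = (Y (k + 1) ^ ((m:ℝ)/n) * M k) ^ ((n:ℝ)/((m:ℝ)+n)) :=
    fun k => (hid2' _ _ (hYpos (k+1)) (hMpos k)).trans
      (main_id _ _ (hYpos (k+1)) (hMpos k)).symm
  -- every solution has norm at most u K
  have hbound : ∀ q : Fin n → ℤ,
      intDist (A.mulVec (fun j => (q j : ℝ)) - b) <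
        ((α - n) / m) * ‖(fun j => (q j : ℝ))‖ ^ (-(n : ℝ) / m) →
      ‖(fun j => (q j : ℝ))‖ ≤ u K := by
    intro q hq
    by_contra hQ
    push_neg at hQ
    set Q : ℝ := ‖(fun j => (q j : ℝ))‖ with hQdef
    have hQpos : 0 < Q := lt_trans (hupos K) hQ
    -- find k ≥ K with u k < Q ≤ u (k+1)
    have hex : ∃ j : ℕ, Q ≤ u (K + j) := by
      obtain ⟨k₀, hk₀⟩ :=
        Filter.eventually_atTop.mp (hYtop.eventually_ge_atTop (Q ^ (((m:ℝ)+n)/m) * M 0))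
      refine ⟨max K k₀ + 1 - K, ?_⟩
      have hKle : K + (max K k₀ + 1 - K) = max K k₀ + 1 := by omega
      rw [hKle]
      have hY1 : Q ^ (((m:ℝ)+n)/m) * M 0 ≤ Y (max K k₀ + 2) := by
        apply hk₀
        omega
      have hM1 : M (max K k₀ + 1) ≤ M 0 := hMmono.antitone (Nat.zero_le _)
      have h3 : Q ^ (((m:ℝ)+n)/m) ≤ Y (max K k₀ + 2) / M (max K k₀ + 1) := by
        rw [le_div_iff₀ (hMpos _)]
        calc Q ^ (((m:ℝ)+n)/m) * M (max K k₀ + 1)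
            ≤ Q ^ (((m:ℝ)+n)/m) * M 0 := by
              apply mul_le_mul_of_nonneg_left hM1 (Real.rpow_nonneg hQpos.le _)
          _ ≤ Y (max K k₀ + 2) := hY1
      calc Q = (Q ^ (((m:ℝ)+n)/m)) ^ ((m:ℝ)/((m:ℝ)+n)) := by
            rw [← Real.rpow_mul hQpos.le]
            rw [div_mul_div_comm, mul_comm ((m:ℝ)+n) (m:ℝ), div_self (ne_of_gt (mul_pos hmR hmn)),
              Real.rpow_one]
        _ ≤ u (max K k₀ + 1) := by
            apply Real.rpow_le_rpow (Real.rpow_nonneg hQpos.le _) h3 (by positivity)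
    set j₀ := Nat.find hex with hj₀
    have hj₀pos : 0 < j₀ := by
      rcases Nat.eq_zero_or_pos j₀ with h | h
      · exfalso
        have := Nat.find_spec hex
        rw [← hj₀, h] at this
        simp only [Nat.add_zero] at this
        linarith
      · exact h
    set k := K + (j₀ - 1) with hk
    have hk1 : k + 1 = K + j₀ := by omega
    have huk : u k < Q := by
      have := Nat.find_min hex (by omega : j₀ - 1 < j₀)
      rw [← hk] at this
      push_neg at this
      exact this
    have huk1 : Q ≤ u (k + 1) := by
      rw [hk1]
      exact Nat.find_spec hex
    -- derive the contradiction
    have hγpos : 0 < γ k := by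
      rw [hγ k]
      apply lt_max_of_lt_left
      apply Real.rpow_pos_of_pos
      exact mul_pos (Real.rpow_pos_of_pos (hYpos _) _) (hMpos _)
    have hkey := key_estimate m n A (y (k + 1)) b q
    rw [← hY (k+1), ← hM (k+1), ← hQdef] at hkey
    have hstep1 : (n:ℝ) * Q * M (k + 1) ≤ n * γ k := by
      have : Q * M (k + 1) ≤ γ k := by
        calc Q * M (k + 1) ≤ u (k+1) * M (k+1) :=
              mul_le_mul_of_nonneg_right huk1 (hMpos _).le
          _ = (Y (k + 2) ^ ((m:ℝ)/n) * M (k + 1)) ^ ((n:ℝ)/((m:ℝ)+n)) := hid1 (k+1)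
          _ ≤ γ k := by rw [hγ k]; exact le_max_right _ _
      calc (n:ℝ) * Q * M (k+1) = n * (Q * M (k+1)) := by ring
        _ ≤ n * γ k := mul_le_mul_of_nonneg_left this hnR.le
    have hstep2 : (m:ℝ) * Y (k + 1) * intDist (A.mulVec (fun j => (q j : ℝ)) - b)
        ≤ (α - n) * γ k := by
      have hYQ : Y (k + 1) * Q ^ (-(n:ℝ)/m) ≤ γ k := by
        calc Y (k + 1) * Q ^ (-(n:ℝ)/m) ≤ Y (k + 1) * (u k) ^ (-(n:ℝ)/m) := by
              apply mul_le_mul_of_nonneg_left _ (hYpos _).le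
              exact Real.rpow_le_rpow_of_nonpos (hupos k) huk.le
                (by rw [neg_div]; exact neg_nonpos_of_nonneg (by positivity))
          _ = (Y (k + 1) ^ ((m:ℝ)/n) * M k) ^ ((n:ℝ)/((m:ℝ)+n)) := hid2 k
          _ ≤ γ k := by rw [hγ k]; exact le_max_left _ _
      calc (m:ℝ) * Y (k + 1) * intDist (A.mulVec (fun j => (q j : ℝ)) - b)
          ≤ (m:ℝ) * Y (k + 1) * (((α - n) / m) * Q ^ (-(n : ℝ) / m)) := by
            exact mul_le_mul_of_nonneg_left hq.le (mul_nonneg hmR.le (hYpos _).le)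
        _ = (α - n) * (Y (k + 1) * Q ^ (-(n:ℝ)/m)) := by
            field_simp
        _ ≤ (α - n) * γ k := by
            apply mul_le_mul_of_nonneg_left hYQ (by linarith)
    have hcontr := hK k (by omega)
    have : intDistR (∑ i, b i * ((y (k + 1)) i : ℝ)) ≤ α * γ k := by
      calc intDistR (∑ i, b i * ((y (k + 1)) i : ℝ))
          ≤ n * Q * M (k+1) + m * Y (k+1) * intDist (A.mulVec (fun j => (q j : ℝ)) - b) :=
            hkey
        _ ≤ n * γ k + (α - n) * γ k := add_le_add hstep1 hstep2
        _ = α * γ k := by ring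
    linarith
  -- finiteness from the norm bound
  set C : ℤ := ⌈u K⌉ with hC
  apply Set.Finite.subset (Set.finite_Icc (fun _ : Fin n => -C) (fun _ : Fin n => C))
  intro q hq
  simp only [Set.mem_setOf_eq] at hq
  have hb' := hbound q hq
  constructor <;> intro j
  all_goals
    have h1 : |(q j : ℝ)| ≤ u K := by
      calc |(q j : ℝ)| ≤ ‖(fun j => (q j : ℝ))‖ := by
            simpa [Real.norm_eq_abs] using norm_le_pi_norm (fun j => ((q j : ℤ) : ℝ)) j
        _ ≤ u K := hb'
    have h2 : |q j| ≤ C := by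
      have : ((|q j| : ℤ) : ℝ) ≤ (C : ℝ) := by
        push_cast
        calc |(q j : ℝ)| ≤ u K := h1
          _ ≤ ⌈u K⌉ := Int.le_ceil _
      exact_mod_cast this
  · exact neg_le_of_abs_le h2
  · exact le_of_abs_le h2
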